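/- Let k ≥ 2 be an integer and let a, b, c₊, c₋ be real numbers. Let V_AB be the 4×4 real symmetric matrix with rows (a, 0, c₊, 0), (0, a, 0, c₋), (c₊, 0, b, 0), (0, c₋, 0, b) (the Simon normal form of a two-mode covariance matrix). Assume V_AB ≥ iΩ₂. Then the complex Hermitian matrix V_AB − (iΩ₁ ⊕ (−(1−2/k)·i·Ω₁)) is positive semidefinite if and only if (ab−c₊²)(ab−c₋²) ≥ (1−2/k)²(a²−1) + b² − 2(1−2/k)c₊c₋. -/

import Mathlib

open Matrix Complex ComplexOrder

/-- The standard symplectic form on one mode. -/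
noncomputable def Omega1 : Matrix (Fin 2) (Fin 2) ℝ := !![0, 1; -1, 0]

/-- Complexification of a real matrix. -/
noncomputable def cplx {m p : Type*} (M : Matrix m p ℝ) : Matrix m p ℂ :=
  M.map (fun x => (x : ℂ))

noncomputable def herm2 (p q r : ℝ) : Matrix (Fin 2) (Fin 2) ℂ :=
  !![(p:ℂ), (q:ℂ)*Complex.I; -(q:ℂ)*Complex.I, (r:ℂ)]

lemma herm2_isHermitian (p q r : ℝ) : (herm2 p q r).IsHermitian := by
  ext i j
  fin_cases i <;> fin_cases j <;>
    simp [herm2, Matrix.IsHermitian, Matrix.conjTranspose_apply, Complex.ext_iff]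

lemma herm2_form (p q r : ℝ) (x : Fin 2 → ℂ) :
    star x ⬝ᵥ (herm2 p q r) *ᵥ x =
      (p * Complex.normSq (x 0) + r * Complex.normSq (x 1)
        - 2 * q * ((starRingEnd ℂ) (x 0) * x 1).im : ℝ) := by
  simp [herm2, dotProduct, mulVec, Fin.sum_univ_two, Complex.normSq_eq_conj_mul_self]
  simp [Complex.ext_iff, Complex.mul_re, Complex.mul_im]
  constructor <;> ring

lemma herm2_posSemidef_iff (p q r : ℝ) :
    (herm2 p q r).PosSemidef ↔ 0 ≤ p ∧ 0 ≤ r ∧ q^2 ≤ p * r := by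
  constructor
  · intro h
    have h0 := h.dotProduct_mulVec_nonneg ![1, 0]
    rw [herm2_form] at h0
    have h1 := h.dotProduct_mulVec_nonneg ![0, 1]
    rw [herm2_form] at h1
    rw [Complex.le_def] at h0 h1
    simp at h0 h1
    refine ⟨h0, h1, ?_⟩
    by_cases hq : q = 0
    · subst hq; simpa using mul_nonneg h0 h1
    have key : ∀ s : ℝ, 0 ≤ r * (s * s) + (2 * q^2) * s + p * q^2 := by
      intro s
      have h2 := h.dotProduct_mulVec_nonneg ![(q:ℂ)*Complex.I, (s:ℂ)]
      rw [herm2_form] at h2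
      rw [Complex.le_def] at h2
      simp [Complex.normSq_mul, Complex.mul_im, Complex.mul_re] at h2
      nlinarith [h2]
    have hd := discrim_le_zero key
    rw [discrim] at hd
    have hq2 : (0:ℝ) < q^2 := by positivity
    nlinarith [hd, hq2]
  · rintro ⟨hp, hr, hle⟩
    refine Matrix.PosSemidef.of_dotProduct_mulVec_nonneg (herm2_isHermitian p q r) fun x => ?_
    rw [herm2_form, Complex.le_def]
    simp only [Complex.ofReal_re, Complex.ofReal_im, Complex.zero_re, Complex.zero_im]
    refine ⟨?_, trivial⟩
    set X := Complex.normSq (x 0) with hX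
    set Y := Complex.normSq (x 1) with hY
    set m := ((starRingEnd ℂ) (x 0) * x 1).im with hm
    have hXn : 0 ≤ X := Complex.normSq_nonneg _
    have hYn : 0 ≤ Y := Complex.normSq_nonneg _
    have hmsq : m^2 ≤ X * Y := by
      have : m^2 ≤ Complex.normSq ((starRingEnd ℂ) (x 0) * x 1) := by
        rw [Complex.normSq_apply]; nlinarith [sq_nonneg (((starRingEnd ℂ) (x 0) * x 1).re)]
      simpa [Complex.normSq_mul, hX, hY] using this
    have h5 : 0 ≤ p*X + r*Y := add_nonneg (mul_nonneg hp hXn) (mul_nonneg hr hYn)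
    have h4 : (2*q*m)^2 ≤ (p*X + r*Y)^2 := by
      nlinarith [mul_le_mul hle hmsq (sq_nonneg m) (mul_nonneg hp hr), sq_nonneg (p*X - r*Y)]
    nlinarith [h4, h5]

lemma herm2_posDef (p q r : ℝ) (hp : 0 < p) (hlt : q^2 < p * r) :
    (herm2 p q r).PosDef := by
  have hr : 0 < r := by nlinarith [sq_nonneg q]
  refine Matrix.PosDef.of_dotProduct_mulVec_pos (herm2_isHermitian p q r) fun x hx => ?_
  rw [herm2_form, Complex.lt_def]
  simp only [Complex.ofReal_re, Complex.ofReal_im, Complex.zero_re, Complex.zero_im]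
  refine ⟨?_, trivial⟩
  set X := Complex.normSq (x 0) with hX
  set Y := Complex.normSq (x 1) with hY
  set m := ((starRingEnd ℂ) (x 0) * x 1).im with hm
  have hXn : 0 ≤ X := Complex.normSq_nonneg _
  have hYn : 0 ≤ Y := Complex.normSq_nonneg _
  have hmsq : m^2 ≤ X * Y := by
    have : m^2 ≤ Complex.normSq ((starRingEnd ℂ) (x 0) * x 1) := by
      rw [Complex.normSq_apply]; nlinarith [sq_nonneg (((starRingEnd ℂ) (x 0) * x 1).re)]
    simpa [Complex.normSq_mul, hX, hY] using this
  have hXY : 0 < X + Y := by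
    rcases Function.ne_iff.mp hx with ⟨i, hi⟩
    fin_cases i
    · have : 0 < X := Complex.normSq_pos.mpr hi
      linarith
    · have : 0 < Y := Complex.normSq_pos.mpr hi
      linarith
  have hpos : 0 < p * X + r * Y := by
    rcases eq_or_lt_of_le hXn with h0 | h0
    · have hY0 : 0 < Y := by linarith
      nlinarith [mul_pos hr hY0, mul_nonneg hp.le hXn]
    · nlinarith [mul_pos hp h0, mul_nonneg hr.le hYn]
  rcases eq_or_lt_of_le (mul_nonneg hXn hYn) with hxy | hxy
  · have hm0 : m = 0 := by nlinarith [sq_nonneg m]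
    rw [hm0]
    simpa using hpos
  · have h4 : (2*q*m)^2 < (p*X + r*Y)^2 := by
      nlinarith [sq_nonneg (p*X - r*Y), mul_lt_mul_of_pos_right hlt hxy,
        mul_le_mul_of_nonneg_left hmsq (le_of_lt (by positivity : (0:ℝ) < 4) )]
    nlinarith [h4, hpos]

lemma cdet_nonneg {n : Type*} [Fintype n] [DecidableEq n] {M : Matrix n n ℂ}
    (h : M.PosSemidef) : 0 ≤ M.det := by
  rw [h.1.det_eq_prod_eigenvalues, ← RCLike.ofReal_prod, RCLike.ofReal_nonneg]
  exact Finset.prod_nonneg fun i _ => h.eigenvalues_nonneg i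

set_option maxHeartbeats 2000000 in
theorem two_mode_k_ext_iff
    (k : ℕ) (hk : 2 ≤ k) (a b cp cm : ℝ)
    (V : Matrix (Fin 2 ⊕ Fin 2) (Fin 2 ⊕ Fin 2) ℝ)
    (hVdef : V = Matrix.fromBlocks !![a, 0; 0, a] !![cp, 0; 0, cm]
      (!![cp, 0; 0, cm]ᵀ) !![b, 0; 0, b])
    (hbona : (cplx V -
      Complex.I • cplx (Matrix.fromBlocks Omega1 0 0 Omega1)).PosSemidef) :
    (cplx V -
      Matrix.fromBlocks (Complex.I • cplx Omega1) 0 0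
        ((-(1 - 2/(k:ℂ)) * Complex.I) • cplx Omega1)).PosSemidef
    ↔
    (a*b - cp^2) * (a*b - cm^2) ≥
      (1 - 2/(k:ℝ))^2 * (a^2 - 1) + b^2 - 2*(1 - 2/(k:ℝ))*cp*cm := by
  subst hVdef
  set t : ℝ := 1 - 2/(k:ℝ) with htdef
  have hkpos : (0:ℝ) < (k:ℝ) := by
    have : (0:ℕ) < k := by omega
    exact_mod_cast this
  have ht0 : 0 ≤ t := by
    rw [htdef]
    have h2k : 2/(k:ℝ) ≤ 1 := by
      rw [div_le_one hkpos]; exact_mod_cast hk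
    linarith
  have ht1 : t < 1 := by
    rw [htdef]
    have : 0 < 2/(k:ℝ) := by positivity
    linarith
  have htc : ((t:ℝ):ℂ) = 1 - 2/(k:ℂ) := by
    rw [htdef]; push_cast; ring
  have hM0 : (cplx (Matrix.fromBlocks !![a, 0; 0, a] !![cp, 0; 0, cm]
        (!![cp, 0; 0, cm]ᵀ) !![b, 0; 0, b]) -
        Complex.I • cplx (Matrix.fromBlocks Omega1 0 0 Omega1))
      = Matrix.fromBlocks (herm2 a (-1) a) (cplx !![cp,0;0,cm]) (cplx !![cp,0;0,cm])ᴴ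
          (herm2 b (-1) b) := by
    ext (i | i) (j | j) <;> fin_cases i <;> fin_cases j <;>
      simp [cplx, Omega1, herm2, Matrix.fromBlocks, Matrix.conjTranspose_apply,
        Matrix.transpose_apply, Matrix.vecHead, Matrix.vecTail]
  have hM : (cplx (Matrix.fromBlocks !![a, 0; 0, a] !![cp, 0; 0, cm]
        (!![cp, 0; 0, cm]ᵀ) !![b, 0; 0, b]) -
        Matrix.fromBlocks (Complex.I • cplx Omega1) 0 0
        ((-(1 - 2/(k:ℂ)) * Complex.I) • cplx Omega1))
      = Matrix.fromBlocks (herm2 a (-1) a) (cplx !![cp,0;0,cm]) (cplx !![cp,0;0,cm])ᴴ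
          (herm2 b t b) := by
    rw [← htc]
    ext (i | i) (j | j) <;> fin_cases i <;> fin_cases j <;>
      simp [cplx, Omega1, herm2, Matrix.fromBlocks, Matrix.conjTranspose_apply,
        Matrix.transpose_apply, Matrix.vecHead, Matrix.vecTail]
  rw [hM0] at hbona
  rw [hM]
  -- consequences of the bona fide condition
  have hAps : (herm2 a (-1) a).PosSemidef := by
    have hs := hbona.submatrix (Sum.inl : Fin 2 → Fin 2 ⊕ Fin 2)
    have heq : ((Matrix.fromBlocks (herm2 a (-1) a) (cplx !![cp,0;0,cm])
        (cplx !![cp,0;0,cm])ᴴ (herm2 b (-1) b)).submatrix Sum.inl Sum.inl)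
        = herm2 a (-1) a := by
      ext i j; simp [Matrix.fromBlocks]
    rwa [heq] at hs
  have hBps : (herm2 b (-1) b).PosSemidef := by
    have hs := hbona.submatrix (Sum.inr : Fin 2 → Fin 2 ⊕ Fin 2)
    have heq : ((Matrix.fromBlocks (herm2 a (-1) a) (cplx !![cp,0;0,cm])
        (cplx !![cp,0;0,cm])ᴴ (herm2 b (-1) b)).submatrix Sum.inr Sum.inr)
        = herm2 b (-1) b := by
      ext i j; simp [Matrix.fromBlocks]
    rwa [heq] at hs
  obtain ⟨ha0, -, ha2⟩ := (herm2_posSemidef_iff a (-1) a).mp hAps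
  obtain ⟨hb0, -, hb2⟩ := (herm2_posSemidef_iff b (-1) b).mp hBps
  norm_num at ha2 hb2
  have hb1 : 1 ≤ b := by nlinarith
  have hbpos : (0:ℝ) < b := by linarith
  -- the 3x3 principal minors of the bona fide matrix
  have hp2 : 0 ≤ a * (b^2-1) - b * cp^2 := by
    have hs := (hbona.submatrix (![Sum.inl 0, Sum.inr 0, Sum.inr 1] : Fin 3 → (Fin 2 ⊕ Fin 2)))
    have hd := cdet_nonneg hs
    rw [Matrix.det_fin_three] at hd
    simp [Matrix.submatrix, herm2, cplx, Matrix.fromBlocks, Matrix.conjTranspose_apply] at hd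
    rw [Complex.le_def] at hd
    simp [Complex.mul_re, Complex.mul_im] at hd
    nlinarith [hd]
  have hm2 : 0 ≤ a * (b^2-1) - b * cm^2 := by
    have hs := (hbona.submatrix (![Sum.inl 1, Sum.inr 0, Sum.inr 1] : Fin 3 → (Fin 2 ⊕ Fin 2)))
    have hd := cdet_nonneg hs
    rw [Matrix.det_fin_three] at hd
    simp [Matrix.submatrix, herm2, cplx, Matrix.fromBlocks, Matrix.conjTranspose_apply] at hd
    rw [Complex.le_def] at hd
    simp [Complex.mul_re, Complex.mul_im] at hd
    nlinarith [hd]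
  -- Schur complement with respect to the lower-right block
  set e : ℝ := b^2 - t^2 with hedef
  have he : 0 < e := by rw [hedef]; nlinarith
  have hBtpd : (herm2 b t b).PosDef := herm2_posDef b t b hbpos (by nlinarith)
  have hdetBt : (herm2 b t b).det = ((e:ℝ):ℂ) := by
    rw [herm2, Matrix.det_fin_two_of, hedef]
    push_cast
    linear_combination ((t:ℝ):ℂ)^2 * Complex.I_sq
  haveI : Invertible (herm2 b t b) :=
    (herm2 b t b).invertibleOfIsUnitDet
      (by rw [hdetBt]; exact isUnit_iff_ne_zero.mpr (Complex.ofReal_ne_zero.mpr he.ne'))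
  have hBtinv : (herm2 b t b)⁻¹ = herm2 (b/e) (-t/e) (b/e) := by
    apply Matrix.inv_eq_right_inv
    ext i j
    fin_cases i <;> fin_cases j <;>
      simp [herm2, Matrix.mul_apply, Fin.sum_univ_two, Matrix.one_apply]
    all_goals field_simp
    all_goals try ring
    all_goals rw [Complex.I_sq] ; push_cast [hedef] ; ring
  have hS : herm2 a (-1) a - cplx !![cp,0;0,cm] * herm2 (b/e) (-t/e) (b/e) *
        (cplx !![cp,0;0,cm])ᴴ
      = herm2 ((a*e - b*cp^2)/e) ((t*cp*cm - e)/e) ((a*e - b*cm^2)/e) := by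
    ext i j
    fin_cases i <;> fin_cases j <;>
      · simp [herm2, cplx, Matrix.mul_apply, Fin.sum_univ_two, Matrix.conjTranspose_apply]
        field_simp
        all_goals ring
  rw [Matrix.PosDef.fromBlocks₂₂ _ _ hBtpd, hBtinv, hS, herm2_posSemidef_iff]
  have hkey : (a*e - b*cp^2)*(a*e - b*cm^2) - (t*cp*cm - e)^2
      = e*((a*b - cp^2)*(a*b - cm^2) - (t^2*(a^2-1) + b^2 - 2*t*cp*cm)) := by
    rw [hedef]; ring
  have hP : 0 ≤ a*e - b*cp^2 := by
    have h1 : 0 ≤ a*(1 - t^2) := mul_nonneg ha0 (by nlinarith)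
    rw [hedef]; nlinarith
  have hR : 0 ≤ a*e - b*cm^2 := by
    have h1 : 0 ≤ a*(1 - t^2) := mul_nonneg ha0 (by nlinarith)
    rw [hedef]; nlinarith
  constructor
  · rintro ⟨-, -, h3⟩
    rw [div_pow, div_mul_div_comm, div_le_div_iff₀ (by positivity) (by positivity)] at h3
    have h6 : (t*cp*cm - e)^2 ≤ (a*e - b*cp^2)*(a*e - b*cm^2) := by nlinarith [h3, mul_pos he he]
    nlinarith [h6, hkey, he]
  · intro hineq
    refine ⟨div_nonneg hP he.le, div_nonneg hR he.le, ?_⟩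
    rw [div_pow, div_mul_div_comm, div_le_div_iff₀ (by positivity) (by positivity)]
    have hD : 0 ≤ e*((a*b - cp^2)*(a*b - cm^2) - (t^2*(a^2-1) + b^2 - 2*t*cp*cm)) :=
      mul_nonneg he.le (by nlinarith [hineq])
    nlinarith [hkey, hD, mul_pos he he]
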